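/- Under the same setup (y = Ax + e, ‖x‖₀ ≤ s₁, |S| = s₂, x̄_S = A_S† y, x̄_{S^c} = 0, δ_{s₁+s₂} < 1), the ℓ₁-norm bound ‖(x - x̄)_S‖₁ ≤ √s₂ · δ_{s₁+s₂} ‖x - x̄‖₁ + √(s₂(1+δ_{s₂})) ‖e‖₂ holds. -/
import Mathlib


open Finset

/-- ℓ2 norm of a vector. -/
noncomputable def l2 {n : ℕ} (v : Fin n → ℝ) : ℝ := Real.sqrt (∑ i, v i ^ 2)

/-- ℓ1 norm of a vector. -/
noncomputable def l1 {n : ℕ} (v : Fin n → ℝ) : ℝ := ∑ i, |v i|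

/-- number of nonzero entries (ℓ0 "norm"). -/
noncomputable def spars {n : ℕ} (v : Fin n → ℝ) : ℕ := Set.ncard {i | v i ≠ 0}

/-- restriction of a vector to an index set (zero off the set). -/
def restr {n : ℕ} (S : Finset (Fin n)) (v : Fin n → ℝ) : Fin n → ℝ :=
  fun i => if i ∈ S then v i else 0

lemma l2_sq {n : ℕ} (v : Fin n → ℝ) : l2 v ^ 2 = ∑ i, v i ^ 2 :=
  Real.sq_sqrt (Finset.sum_nonneg fun i _ => sq_nonneg _)

lemma l2_nonneg {n : ℕ} (v : Fin n → ℝ) : 0 ≤ l2 v := Real.sqrt_nonneg _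

lemma l1_nonneg {n : ℕ} (v : Fin n → ℝ) : 0 ≤ l1 v :=
  Finset.sum_nonneg fun i _ => abs_nonneg _

lemma spars_le_card {n : ℕ} (T : Finset (Fin n)) (u : Fin n → ℝ)
    (h : ∀ i ∉ T, u i = 0) : spars u ≤ T.card := by
  have hsub : {i | u i ≠ 0} ⊆ (T : Set (Fin n)) := by
    intro i hi
    by_contra hc
    exact hi (h i hc)
  calc spars u ≤ (T : Set (Fin n)).ncard :=
        Set.ncard_le_ncard hsub (Set.toFinite _)
    _ = T.card := Set.ncard_coe_finset T

lemma l2_eq_zero {n : ℕ} (v : Fin n → ℝ) (h : l2 v = 0) : v = 0 := by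
  have hsum : ∑ i, v i ^ 2 = 0 := by
    have := Real.sqrt_eq_zero (Finset.sum_nonneg fun i _ => sq_nonneg (v i)) |>.mp h
    exact this
  funext i
  have := (Finset.sum_eq_zero_iff_of_nonneg (fun i _ => sq_nonneg (v i))).mp hsum i (mem_univ i)
  exact pow_eq_zero_iff (by norm_num) |>.mp this

/-- approximate orthogonality base inequality -/
lemma polar {M N : ℕ} (A : Matrix (Fin M) (Fin N) ℝ) (δ : ℝ) (w v : Fin N → ℝ)
    (h1 : (1 - δ) * l2 (w + v) ^ 2 ≤ l2 (A.mulVec (w + v)) ^ 2)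
    (h2 : l2 (A.mulVec (w - v)) ^ 2 ≤ (1 + δ) * l2 (w - v) ^ 2) :
    (∑ i, w i * v i) - (∑ j, A.mulVec w j * A.mulVec v j)
      ≤ δ * (l2 w ^ 2 + l2 v ^ 2) / 2 := by
  have expand : ∀ {k : ℕ} (a b : Fin k → ℝ),
      (∑ i, (a i + b i) ^ 2) = (∑ i, a i ^ 2) + 2 * (∑ i, a i * b i) + (∑ i, b i ^ 2) ∧
      (∑ i, (a i - b i) ^ 2) = (∑ i, a i ^ 2) - 2 * (∑ i, a i * b i) + (∑ i, b i ^ 2) := by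
    intro k a b
    constructor
    · rw [Finset.mul_sum, ← Finset.sum_add_distrib, ← Finset.sum_add_distrib]
      exact Finset.sum_congr rfl fun i _ => by ring
    · rw [Finset.mul_sum, ← Finset.sum_sub_distrib, ← Finset.sum_add_distrib]
      exact Finset.sum_congr rfl fun i _ => by ring
  have hA1 : A.mulVec (w + v) = A.mulVec w + A.mulVec v := Matrix.mulVec_add A w v
  have hA2 : A.mulVec (w - v) = A.mulVec w - A.mulVec v := Matrix.mulVec_sub A w v
  rw [hA1] at h1
  rw [hA2] at h2
  rw [l2_sq, l2_sq] at h1 h2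
  rw [l2_sq, l2_sq]
  have e1 := (expand w v).1
  have e2 := (expand w v).2
  have e3 := (expand (A.mulVec w) (A.mulVec v)).1
  have e4 := (expand (A.mulVec w) (A.mulVec v)).2
  simp only [Pi.add_apply, Pi.sub_apply] at h1 h2
  rw [e1] at h1; rw [e2] at h2; rw [e3] at h1; rw [e4] at h2
  nlinarith [h1, h2]
theorem stmt4 {M N : ℕ} (A : Matrix (Fin M) (Fin N) ℝ)
    (x : Fin N → ℝ) (e : Fin M → ℝ) (y : Fin M → ℝ)
    (hy : y = A.mulVec x + e)
    (s₁ s₂ : ℕ) (hx : spars x ≤ s₁)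
    (S : Finset (Fin N)) (hS : S.card = s₂)
    (xb : Fin N → ℝ)
    -- x̄ is supported on S and x̄_S = A_S† y, characterized by the normal equations
    (hxbsupp : ∀ i ∉ S, xb i = 0)
    (hxbls : ∀ i ∈ S, ∑ j, A j i * (A.mulVec xb j - y j) = 0)
    (δ₁ δ₂ : ℝ) (hδ₁ : δ₁ < 1)
    (hRIP₁ : ∀ v : Fin N → ℝ, spars v ≤ s₁ + s₂ →
      (1 - δ₁) * (l2 v) ^ 2 ≤ (l2 (A.mulVec v)) ^ 2 ∧
      (l2 (A.mulVec v)) ^ 2 ≤ (1 + δ₁) * (l2 v) ^ 2)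
    (hRIP₂ : ∀ v : Fin N → ℝ, spars v ≤ s₂ →
      (1 - δ₂) * (l2 v) ^ 2 ≤ (l2 (A.mulVec v)) ^ 2 ∧
      (l2 (A.mulVec v)) ^ 2 ≤ (1 + δ₂) * (l2 v) ^ 2) :
    l1 (restr S (x - xb)) ≤ Real.sqrt s₂ * δ₁ * l1 (x - xb) + Real.sqrt (s₂ * (1 + δ₂)) * l2 e := by
  rcases Nat.eq_zero_or_pos s₂ with h0 | hpos
  · have hSe : S = ∅ := Finset.card_eq_zero.mp (by rw [hS, h0])
    subst h0
    have hL : l1 (restr S (x - xb)) = 0 := by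
      simp [l1, restr, hSe]
    rw [hL]
    norm_num
  -- main case : s₂ ≥ 1
  obtain ⟨i₀, hi₀⟩ := Finset.card_pos.mp (by rw [hS]; exact hpos)
  -- basis vector to show δ₁ ≥ 0 and 1 + δ₂ ≥ 0
  set b : Fin N → ℝ := fun i => if i = i₀ then 1 else 0 with hb
  have hsb : spars b = 1 := by
    have hset : {i | b i ≠ 0} = {i₀} := by
      ext i
      by_cases h : i = i₀ <;> simp [hb, h]
    rw [spars, hset, Set.ncard_singleton]
  have hl2b : l2 b ^ 2 = 1 := by
    rw [l2_sq]
    have h : ∀ i, b i ^ 2 = if i = i₀ then 1 else 0 := by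
      intro i; by_cases h : i = i₀ <;> simp [hb, h]
    simp [h]
  have hδ₁0 : 0 ≤ δ₁ := by
    obtain ⟨h1, h2⟩ := hRIP₁ b (by rw [hsb]; omega)
    rw [hl2b] at h1 h2; linarith
  have hδ₂0 : 0 ≤ 1 + δ₂ := by
    obtain ⟨_, h2⟩ := hRIP₂ b (by rw [hsb]; omega)
    rw [hl2b] at h2
    nlinarith [sq_nonneg (l2 (A.mulVec b))]
  -- support finset
  set T : Finset (Fin N) := S ∪ Finset.univ.filter (fun i => x i ≠ 0) with hT
  have hTcard : T.card ≤ s₂ + s₁ := by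
    have h1 : (Finset.univ.filter (fun i => x i ≠ 0)).card = spars x := by
      rw [spars, ← Set.ncard_coe_finset]
      congr 1
      ext i; simp
    calc T.card ≤ S.card + (Finset.univ.filter (fun i => x i ≠ 0)).card :=
          Finset.card_union_le _ _
      _ ≤ s₂ + s₁ := by rw [hS, h1]; omega
  set v : Fin N → ℝ := x - xb with hv
  set w : Fin N → ℝ := restr S v with hw
  have hST : S ⊆ T := Finset.subset_union_left
  have hvT : ∀ i ∉ T, v i = 0 := by
    intro i hi
    rw [hT] at hi
    simp only [Finset.mem_union, Finset.mem_filter, Finset.mem_univ, true_and, not_or,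
      not_not] at hi
    simp [hv, hi.2, hxbsupp i hi.1]
  have hwS : ∀ i ∉ S, w i = 0 := by
    intro i hi; simp [hw, restr, hi]
  have hwT : ∀ i ∉ T, w i = 0 := fun i hi => hwS i (fun h => hi (hST h))
  have hsparsT : ∀ u : Fin N → ℝ, (∀ i ∉ T, u i = 0) → spars u ≤ s₁ + s₂ := by
    intro u hu
    calc spars u ≤ T.card := spars_le_card T u hu
      _ ≤ s₂ + s₁ := hTcard
      _ = s₁ + s₂ := by omega
  have hsw : spars w ≤ s₂ := by
    calc spars w ≤ S.card := spars_le_card S w hwS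
      _ = s₂ := hS
  have hwv : (∑ i, w i * v i) = l2 w ^ 2 := by
    rw [l2_sq]
    apply Finset.sum_congr rfl
    intro i _
    by_cases hi : i ∈ S
    · simp only [hw, restr, if_pos hi]; ring
    · simp only [hw, restr, if_neg hi]; ring
  have hab : l2 w ≤ l2 v := by
    apply Real.sqrt_le_sqrt
    apply Finset.sum_le_sum
    intro i _
    by_cases hi : i ∈ S
    · simp [hw, restr, hi]
    · simp only [hw, restr, if_neg hi]
      simpa using sq_nonneg (v i)
  -- normal equations
  have hnorm : (∑ j, A.mulVec w j * (A.mulVec xb j - y j)) = 0 := by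
    have swap : (∑ j, A.mulVec w j * (A.mulVec xb j - y j))
        = ∑ i, w i * (∑ j, A j i * (A.mulVec xb j - y j)) := by
      simp_rw [Matrix.mulVec, dotProduct, Finset.sum_mul, Finset.mul_sum]
      rw [Finset.sum_comm]
      apply Finset.sum_congr rfl
      intro i _
      apply Finset.sum_congr rfl
      intro j _
      ring
    rw [swap]
    apply Finset.sum_eq_zero
    intro i _
    by_cases hi : i ∈ S
    · rw [hxbls i hi, mul_zero]
    · rw [hwS i hi, zero_mul]
  have hres : ∀ j, A.mulVec xb j - y j = -(A.mulVec v j) - e j := by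
    intro j
    have h1 : A.mulVec v j = A.mulVec x j - A.mulVec xb j := by
      rw [hv, Matrix.mulVec_sub]; rfl
    rw [hy]
    simp only [Pi.add_apply]
    rw [h1]
    ring
  have hADot : (∑ j, A.mulVec w j * A.mulVec v j) = -(∑ j, A.mulVec w j * e j) := by
    have h2 : (∑ j, A.mulVec w j * (-(A.mulVec v j) - e j)) = 0 := by
      rw [← hnorm]
      apply Finset.sum_congr rfl
      intro j _
      rw [hres j]
    have h3 : (∑ j, A.mulVec w j * (-(A.mulVec v j) - e j))
        = -(∑ j, A.mulVec w j * A.mulVec v j) - (∑ j, A.mulVec w j * e j) := by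
      rw [← Finset.sum_neg_distrib, ← Finset.sum_sub_distrib]
      apply Finset.sum_congr rfl
      intro j _
      ring
    rw [h3] at h2
    linarith
  have hCS : |∑ j, A.mulVec w j * e j| ≤ l2 (A.mulVec w) * l2 e := by
    have h := Finset.sum_mul_sq_le_sq_mul_sq Finset.univ (A.mulVec w) e
    rw [l2, l2, ← Real.sqrt_mul (Finset.sum_nonneg fun j _ => sq_nonneg _),
      ← Real.sqrt_sq_eq_abs]
    exact Real.sqrt_le_sqrt h
  have hAw : l2 (A.mulVec w) ≤ Real.sqrt (1 + δ₂) * l2 w := by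
    have h := (hRIP₂ w hsw).2
    calc l2 (A.mulVec w) = Real.sqrt (l2 (A.mulVec w) ^ 2) :=
          (Real.sqrt_sq (l2_nonneg _)).symm
      _ ≤ Real.sqrt ((1 + δ₂) * l2 w ^ 2) := Real.sqrt_le_sqrt h
      _ = Real.sqrt (1 + δ₂) * l2 w := by
          rw [Real.sqrt_mul hδ₂0, Real.sqrt_sq (l2_nonneg _)]
  by_cases haz : l2 w = 0
  · have hw0 : w = 0 := l2_eq_zero w haz
    have hL : l1 w = 0 := by rw [hw0]; simp [l1]
    rw [hL]
    have h1 := mul_nonneg (mul_nonneg (Real.sqrt_nonneg (s₂ : ℝ)) hδ₁0) (l1_nonneg v)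
    have h2 := mul_nonneg (Real.sqrt_nonneg ((s₂ : ℝ) * (1 + δ₂))) (l2_nonneg e)
    linarith
  have ha : 0 < l2 w := lt_of_le_of_ne (l2_nonneg w) (Ne.symm haz)
  have hbb : 0 < l2 v := lt_of_lt_of_le ha hab
  set t : ℝ := Real.sqrt (l2 v / l2 w) with ht
  have htpos : 0 < t := Real.sqrt_pos.mpr (div_pos hbb ha)
  have ht2 : t ^ 2 = l2 v / l2 w := Real.sq_sqrt (le_of_lt (div_pos hbb ha))
  set w' : Fin N → ℝ := fun i => t * w i with hw'
  set v' : Fin N → ℝ := fun i => t⁻¹ * v i with hv'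
  have hsp1 : spars (w' + v') ≤ s₁ + s₂ := by
    apply hsparsT
    intro i hi
    simp [hw', hv', hwT i hi, hvT i hi]
  have hsp2 : spars (w' - v') ≤ s₁ + s₂ := by
    apply hsparsT
    intro i hi
    simp [hw', hv', hwT i hi, hvT i hi]
  have hAw' : ∀ j, A.mulVec w' j = t * A.mulVec w j := by
    intro j
    simp only [Matrix.mulVec, dotProduct, hw', Finset.mul_sum]
    exact Finset.sum_congr rfl fun i _ => by ring
  have hAv' : ∀ j, A.mulVec v' j = t⁻¹ * A.mulVec v j := by
    intro j
    simp only [Matrix.mulVec, dotProduct, hv', Finset.mul_sum]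
    exact Finset.sum_congr rfl fun i _ => by ring
  have hkey := polar A δ₁ w' v' ((hRIP₁ (w' + v') hsp1).1) ((hRIP₁ (w' - v') hsp2).2)
  have hinv : t * t⁻¹ = 1 := mul_inv_cancel₀ htpos.ne'
  have h1 : (∑ i, w' i * v' i) = l2 w ^ 2 := by
    rw [← hwv]
    apply Finset.sum_congr rfl
    intro i _
    simp only [hw', hv']
    calc t * w i * (t⁻¹ * v i) = (t * t⁻¹) * (w i * v i) := by ring
      _ = w i * v i := by rw [hinv, one_mul]
  have h2 : (∑ j, A.mulVec w' j * A.mulVec v' j) = ∑ j, A.mulVec w j * A.mulVec v j := by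
    apply Finset.sum_congr rfl
    intro j _
    rw [hAw' j, hAv' j]
    calc t * A.mulVec w j * (t⁻¹ * A.mulVec v j)
        = (t * t⁻¹) * (A.mulVec w j * A.mulVec v j) := by ring
      _ = A.mulVec w j * A.mulVec v j := by rw [hinv, one_mul]
  have h3 : l2 w' ^ 2 = t ^ 2 * l2 w ^ 2 := by
    rw [l2_sq, l2_sq, Finset.mul_sum]
    apply Finset.sum_congr rfl
    intro i _
    simp only [hw']
    ring
  have h4 : l2 v' ^ 2 = (t⁻¹) ^ 2 * l2 v ^ 2 := by
    rw [l2_sq, l2_sq, Finset.mul_sum]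
    apply Finset.sum_congr rfl
    intro i _
    simp only [hv']
    ring
  have ht2' : (t⁻¹) ^ 2 = l2 w / l2 v := by
    rw [inv_pow, ht2, inv_div]
  have hprod : δ₁ * (l2 w' ^ 2 + l2 v' ^ 2) / 2 = δ₁ * (l2 w * l2 v) := by
    rw [h3, h4, ht2, ht2', l2_sq, l2_sq, ← l2_sq w, ← l2_sq v]
    field_simp
    ring
  rw [h1, h2, hprod, hADot] at hkey
  -- hkey : l2 w ^ 2 - -(∑ Aw e) ≤ δ₁ * (l2 w * l2 v)
  have hbound : -(∑ j, A.mulVec w j * e j) ≤ Real.sqrt (1 + δ₂) * l2 w * l2 e := by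
    calc -(∑ j, A.mulVec w j * e j) ≤ |∑ j, A.mulVec w j * e j| := neg_le_abs _
      _ ≤ l2 (A.mulVec w) * l2 e := hCS
      _ ≤ Real.sqrt (1 + δ₂) * l2 w * l2 e :=
          mul_le_mul_of_nonneg_right hAw (l2_nonneg e)
  have hmain : l2 w ^ 2 ≤ δ₁ * (l2 w * l2 v) + Real.sqrt (1 + δ₂) * l2 w * l2 e := by
    linarith
  have hdiv : l2 w ≤ δ₁ * l2 v + Real.sqrt (1 + δ₂) * l2 e := by
    by_contra hc
    push_neg at hc
    have h5 := mul_lt_mul_of_pos_left hc ha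
    nlinarith
  -- ℓ1 conversion
  have hl1w : l1 w ≤ Real.sqrt s₂ * l2 w := by
    have hCS2 := Finset.sum_mul_sq_le_sq_mul_sq Finset.univ
      (fun i => if i ∈ S then (1 : ℝ) else 0) (fun i => |w i|)
    have hA' : (∑ i, (if i ∈ S then (1 : ℝ) else 0) * |w i|) = l1 w := by
      rw [l1]
      apply Finset.sum_congr rfl
      intro i _
      by_cases hi : i ∈ S
      · rw [if_pos hi, one_mul]
      · rw [if_neg hi, hwS i hi, abs_zero, mul_zero]
    have hB : (∑ i, (if i ∈ S then (1 : ℝ) else 0) ^ 2) = (s₂ : ℝ) := by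
      have h : ∀ i, (if i ∈ S then (1 : ℝ) else 0) ^ 2 = if i ∈ S then 1 else 0 := by
        intro i; by_cases hi : i ∈ S <;> simp [hi]
      simp_rw [h]
      rw [Finset.sum_boole]
      simp [Finset.filter_mem_eq_inter, hS]
    have hC : (∑ i, |w i| ^ 2) = l2 w ^ 2 := by
      rw [l2_sq]; simp [sq_abs]
    rw [hA', hB, hC] at hCS2
    calc l1 w = Real.sqrt (l1 w ^ 2) := (Real.sqrt_sq (l1_nonneg w)).symm
      _ ≤ Real.sqrt ((s₂ : ℝ) * l2 w ^ 2) := Real.sqrt_le_sqrt hCS2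
      _ = Real.sqrt s₂ * l2 w := by
          rw [Real.sqrt_mul (Nat.cast_nonneg s₂), Real.sqrt_sq (l2_nonneg w)]
  have hl2v : l2 v ≤ l1 v := by
    rw [l2, l1]
    calc Real.sqrt (∑ i, v i ^ 2) ≤ Real.sqrt ((∑ i, |v i|) ^ 2) := by
          apply Real.sqrt_le_sqrt
          calc (∑ i, v i ^ 2) = ∑ i, |v i| ^ 2 := by simp [sq_abs]
            _ ≤ (∑ i, |v i|) ^ 2 :=
              Finset.sum_sq_le_sq_sum_of_nonneg (fun i _ => abs_nonneg _)
      _ = ∑ i, |v i| := Real.sqrt_sq (Finset.sum_nonneg fun i _ => abs_nonneg _)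
  calc l1 w ≤ Real.sqrt s₂ * l2 w := hl1w
    _ ≤ Real.sqrt s₂ * (δ₁ * l2 v + Real.sqrt (1 + δ₂) * l2 e) :=
        mul_le_mul_of_nonneg_left hdiv (Real.sqrt_nonneg _)
    _ ≤ Real.sqrt s₂ * (δ₁ * l1 v + Real.sqrt (1 + δ₂) * l2 e) := by
        apply mul_le_mul_of_nonneg_left _ (Real.sqrt_nonneg _)
        have h6 := mul_le_mul_of_nonneg_left hl2v hδ₁0
        linarith
    _ = Real.sqrt s₂ * δ₁ * l1 v + Real.sqrt ((s₂ : ℝ) * (1 + δ₂)) * l2 e := by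
        rw [Real.sqrt_mul (Nat.cast_nonneg s₂)]
        ring
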